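/- Let L and L' be affine subspaces of ℝⁿ with L' a proper subset of L. Then the set of points x ∈ ℝⁿ satisfying dist(x, L') = dist(x, L) is contained in a proper affine subspace of ℝⁿ; in particular it has Lebesgue measure zero. -/

import Mathlib

open Metric MeasureTheory EuclideanGeometry

private lemma infDist_eq_dist_orthProj {n : ℕ}
    (s : AffineSubspace ℝ (EuclideanSpace ℝ (Fin n))) [Nonempty s]
    [s.direction.HasOrthogonalProjection] (x : EuclideanSpace ℝ (Fin n)) :
    infDist x (s : Set (EuclideanSpace ℝ (Fin n))) =
      dist x (orthogonalProjection s x : EuclideanSpace ℝ (Fin n)) := by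
  refine le_antisymm (infDist_le_dist_of_mem (orthogonalProjection_mem x)) ?_
  rw [← not_lt]
  intro hlt
  rw [infDist_lt_iff ⟨_, (orthogonalProjection_mem x : _)⟩] at hlt
  obtain ⟨y, hy, hd⟩ := hlt
  have h := dist_sq_eq_dist_orthogonalProjection_sq_add_dist_orthogonalProjection_sq
    (s := s) x hy
  rw [dist_comm y x] at h
  have h2 : dist x y ≥ 0 := dist_nonneg
  nlinarith [dist_nonneg (x := y) (y := (orthogonalProjection s x : EuclideanSpace ℝ (Fin n)))]

theorem stmt3 {n : ℕ} (L L' : AffineSubspace ℝ (EuclideanSpace ℝ (Fin n)))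
    (hne' : (L' : Set (EuclideanSpace ℝ (Fin n))).Nonempty)
    (hssub : (L' : Set (EuclideanSpace ℝ (Fin n))) ⊂ (L : Set (EuclideanSpace ℝ (Fin n)))) :
    ∃ M : AffineSubspace ℝ (EuclideanSpace ℝ (Fin n)), M ≠ ⊤ ∧
      {x : EuclideanSpace ℝ (Fin n) |
        infDist x (L' : Set (EuclideanSpace ℝ (Fin n))) =
          infDist x (L : Set (EuclideanSpace ℝ (Fin n)))} ⊆ (M : Set (EuclideanSpace ℝ (Fin n))) ∧
      volume {x : EuclideanSpace ℝ (Fin n) |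
        infDist x (L' : Set (EuclideanSpace ℝ (Fin n))) =
          infDist x (L : Set (EuclideanSpace ℝ (Fin n)))} = 0 := by
  haveI : Nonempty L' := hne'.to_subtype
  haveI : Nonempty L := (hne'.mono hssub.subset).to_subtype
  set f : EuclideanSpace ℝ (Fin n) →ᵃ[ℝ] EuclideanSpace ℝ (Fin n) :=
    L.subtype.comp (orthogonalProjection L) with hf
  set M := L'.comap f with hM
  have hMtop : M ≠ ⊤ := by
    obtain ⟨q, hqL, hqL'⟩ := Set.exists_of_ssubset hssub
    intro htop
    apply hqL'
    have hq : q ∈ M := htop ▸ AffineSubspace.mem_top ℝ _ q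
    have hfq : f q = q := by
      rw [hf, AffineMap.comp_apply]
      exact orthogonalProjection_eq_self_iff.mpr hqL
    rwa [hM, AffineSubspace.mem_comap, hfq] at hq
  have hsub : {x : EuclideanSpace ℝ (Fin n) |
      infDist x (L' : Set (EuclideanSpace ℝ (Fin n))) =
        infDist x (L : Set (EuclideanSpace ℝ (Fin n)))} ⊆
      (M : Set (EuclideanSpace ℝ (Fin n))) := by
    intro x hx
    simp only [Set.mem_setOf_eq] at hx
    rw [infDist_eq_dist_orthProj L x, infDist_eq_dist_orthProj L' x] at hx
    have hmemL : (orthogonalProjection L' x : EuclideanSpace ℝ (Fin n)) ∈ L :=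
      hssub.subset (orthogonalProjection_mem x)
    have h := dist_sq_eq_dist_orthogonalProjection_sq_add_dist_orthogonalProjection_sq
      (s := L) x hmemL
    rw [dist_comm (orthogonalProjection L' x : EuclideanSpace ℝ (Fin n)) x] at h
    rw [← hx] at h
    have h0 : dist ((orthogonalProjection L' x : EuclideanSpace ℝ (Fin n)))
        ((orthogonalProjection L x : EuclideanSpace ℝ (Fin n))) = 0 := by
      nlinarith [dist_nonneg (x := (orthogonalProjection L' x : EuclideanSpace ℝ (Fin n)))
        (y := (orthogonalProjection L x : EuclideanSpace ℝ (Fin n)))]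
    have heq : (orthogonalProjection L x : EuclideanSpace ℝ (Fin n)) =
        (orthogonalProjection L' x : EuclideanSpace ℝ (Fin n)) := (dist_eq_zero.mp h0).symm
    show x ∈ M
    rw [hM, AffineSubspace.mem_comap]
    show (orthogonalProjection L x : EuclideanSpace ℝ (Fin n)) ∈ L'
    rw [heq]
    exact orthogonalProjection_mem x
  exact ⟨M, hMtop, hsub,
    measure_mono_null hsub (Measure.addHaar_affineSubspace volume M hMtop)⟩
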